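/- Let ε'' : ℝ with 2/9 < ε'' < 1/3, let ℓ', m : ℕ, and let p : ℝ≥0∞ with hp : p ≤ 1 be such that (m : ℝ) · p.toReal = (1 − 3·ε'') · ℓ' (equivalently, 3·(1/3 − ε'')·ℓ'). Under the binomial distribution PMF.binomial p hp m on Fin (m+1), the probability of the event {k : Fin (m+1) | (ℓ' : ℝ)/3 ≤ (k : ℝ)} is at most ENNReal.ofReal (Real.exp (−((9·ε'' − 2)^2 · ℓ') / (3·(4 − 9·ε'')))). -/

import Mathlib

open scoped ENNReal

lemma aux_two_mul_div_le_log {x : ℝ} (hx : 0 ≤ x) :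
    2 * x / (2 + x) ≤ Real.log (1 + x) := by
  have hd : ∀ y : ℝ, 0 < 1 + y →
      HasDerivAt (fun y : ℝ => (2 + y) * Real.log (1 + y) - 2 * y)
        (1 * Real.log (1 + y) + (2 + y) * (1 / (1 + y)) - 2) y := by
    intro y h1y
    have h1 : HasDerivAt (fun y : ℝ => 1 + y) 1 y := (hasDerivAt_id y).const_add 1
    have h2 : HasDerivAt (fun y : ℝ => Real.log (1 + y)) (1 / (1 + y)) y := by
      simpa using h1.log h1y.ne'
    have h4 : HasDerivAt (fun y : ℝ => 2 * y) 2 y := by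
      simpa using (hasDerivAt_id y).const_mul (2:ℝ)
    exact (((hasDerivAt_id y).const_add 2).mul h2).sub h4
  have key : ∀ y : ℝ, 0 ≤ y → 0 ≤ (2 + y) * Real.log (1 + y) - 2 * y := by
    have hmono : MonotoneOn (fun y : ℝ => (2 + y) * Real.log (1 + y) - 2 * y) (Set.Ici 0) := by
      apply monotoneOn_of_deriv_nonneg (convex_Ici 0)
      · apply ContinuousOn.sub
        · refine (continuousOn_const.add continuousOn_id).mul
            ((continuousOn_const.add continuousOn_id).log ?_)
          intro y hy
          simp only [Set.mem_Ici] at hy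
          intro h; simp only [Pi.add_apply, id_eq] at h; linarith
        · exact continuousOn_const.mul continuousOn_id
      · intro y hy
        rw [interior_Ici] at hy
        simp only [Set.mem_Ioi] at hy
        exact ((hd y (by linarith)).differentiableAt).differentiableWithinAt
      · intro y hy
        rw [interior_Ici] at hy
        simp only [Set.mem_Ioi] at hy
        have h1y : (0:ℝ) < 1 + y := by linarith
        rw [(hd y h1y).deriv]
        have hlog : 1 - (1 + y)⁻¹ ≤ Real.log (1 + y) := by
          have := Real.log_le_sub_one_of_pos (x := (1 + y)⁻¹) (by positivity)
          rw [Real.log_inv] at this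
          linarith
        have h5 : (2 + y) * (1 / (1 + y)) = 1 + 1 / (1 + y) := by field_simp; ring
        rw [h5]
        have h6 : (1:ℝ) - 1 / (1 + y) ≤ Real.log (1 + y) := by
          rw [one_div]; exact hlog
        nlinarith [h6]
    intro y hy
    have := hmono (Set.self_mem_Ici) (Set.mem_Ici.2 hy) hy
    simpa using this
  have h2x : (0:ℝ) < 2 + x := by linarith
  rw [div_le_iff₀ h2x]
  have := key x hx
  nlinarith


/-- Upper-tail Chernoff bound used in the unforgeability proof of the OWF-based SRDS:
for a binomial with `m` trials and mean `(1 − 3ε'')·ℓ'` where `2/9 < ε'' < 1/3`, the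
number of successes is at least `ℓ'/3` with probability at most
`exp(−(9ε''−2)²ℓ'/(3(4−9ε'')))`. -/
theorem binomial_chernoff_upper_tail (ε'' : ℝ) (hε0 : 2 / 9 < ε'') (hε1 : ε'' < 1 / 3)
    (ℓ' m : ℕ) (p : ℝ≥0∞) (hp : p ≤ 1)
    (hmean : (m : ℝ) * p.toReal = (1 - 3 * ε'') * (ℓ' : ℝ)) :
    (PMF.binomial p.toNNReal (by simpa using ENNReal.toNNReal_mono ENNReal.one_ne_top hp) m).toOuterMeasure
        {k : Fin (m + 1) | (ℓ' : ℝ) / 3 ≤ (k.val : ℝ)} ≤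
      ENNReal.ofReal (Real.exp (-((9 * ε'' - 2) ^ 2 * (ℓ' : ℝ)) / (3 * (4 - 9 * ε'')))) := by
  set q : ℝ := p.toReal with hq
  have hpfin : p ≠ ∞ := (lt_of_le_of_lt hp ENNReal.one_lt_top).ne
  have hq0 : 0 ≤ q := ENNReal.toReal_nonneg
  have hq1 : q ≤ 1 := by
    rw [hq, ← ENNReal.toReal_one]
    exact ENNReal.toReal_mono ENNReal.one_ne_top hp
  have hpq : p = ENNReal.ofReal q := (ENNReal.ofReal_toReal hpfin).symm
  have hs : (0:ℝ) < 3 - 9 * ε'' := by linarith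
  set δ : ℝ := (9 * ε'' - 2) / (3 - 9 * ε'') with hδdef
  have hδ : 0 < δ := div_pos (by linarith) hs
  set c : ℝ := 1 + δ with hcdef
  have hc1 : (1:ℝ) ≤ c := by linarith
  have hc0 : (0:ℝ) < c := by linarith
  set t : ℝ := Real.log c with htdef
  have ht0 : 0 ≤ t := Real.log_nonneg hc1
  have hexp_t : Real.exp t = c := Real.exp_log hc0
  have hμ0 : 0 ≤ (m:ℝ) * q := by positivity
  set a : ℝ := (ℓ':ℝ) / 3 with hadef
  have ha : a = (1 + δ) * ((m:ℝ) * q) := by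
    rw [hadef, hmean, hδdef]
    field_simp
    ring
  have ha0 : 0 ≤ a := by positivity
  -- the event
  set E : Set (Fin (m+1)) := {k : Fin (m + 1) | (ℓ' : ℝ) / 3 ≤ (k.val : ℝ)} with hEdef
  rw [PMF.toOuterMeasure_apply, tsum_fintype]
  -- step 1: indicator bound
  have step1 : ∀ k : Fin (m+1), E.indicator (PMF.binomial p.toNNReal (by simpa using ENNReal.toNNReal_mono ENNReal.one_ne_top hp) m) k ≤
      (PMF.binomial p.toNNReal (by simpa using ENNReal.toNNReal_mono ENNReal.one_ne_top hp) m) k * ENNReal.ofReal (Real.exp (t * ((k:ℕ) - a))) := by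
    intro k
    by_cases hk : k ∈ E
    · rw [Set.indicator_of_mem hk]
      have hka : a ≤ (k:ℕ) := hk
      calc (PMF.binomial p.toNNReal (by simpa using ENNReal.toNNReal_mono ENNReal.one_ne_top hp) m) k = (PMF.binomial p.toNNReal (by simpa using ENNReal.toNNReal_mono ENNReal.one_ne_top hp) m) k * 1 := (mul_one _).symm
        _ ≤ _ := by
          gcongr
          exact ENNReal.one_le_ofReal.2 (Real.one_le_exp (by nlinarith))
    · rw [Set.indicator_of_notMem hk]; exact zero_le
  refine le_trans (Finset.sum_le_sum (fun k _ => step1 k)) ?_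
  -- step 2: rewrite each term
  have hterm : ∀ k : Fin (m+1), (PMF.binomial p.toNNReal (by simpa using ENNReal.toNNReal_mono ENNReal.one_ne_top hp) m) k *
      ENNReal.ofReal (Real.exp (t * ((k:ℕ) - a))) =
      ENNReal.ofReal (Real.exp (-(t * a))) *
        ((p * ENNReal.ofReal c) ^ (k:ℕ) * (1 - p) ^ (m - (k:ℕ)) * (m.choose k)) := by
    intro k
    change (PMF.binomial p.toNNReal ((ENNReal.toNNReal_mono ENNReal.one_ne_top hp).trans_eq ENNReal.toNNReal_one) m) k * _ = _
    rw [PMF.binomial_apply, ENNReal.coe_toNNReal hpfin]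
    have hfin : ((Fin.last m : Fin (m+1)) : ℕ) - (k:ℕ) = m - (k:ℕ) := by
      rw [Fin.val_last]
    have hre : Real.exp (t * ((k:ℕ) - a)) = Real.exp (-(t * a)) * c ^ (k:ℕ) := by
      rw [← hexp_t, ← Real.exp_nat_mul, ← Real.exp_add]
      ring_nf
    rw [hfin, hre, ENNReal.ofReal_mul (by positivity), ENNReal.ofReal_pow hc0.le,
      mul_pow]
    ring
  rw [Finset.sum_congr rfl (fun k _ => hterm k), ← Finset.mul_sum]
  -- step 3: binomial theorem
  have hsum : ∑ k : Fin (m+1), (p * ENNReal.ofReal c) ^ (k:ℕ) * (1 - p) ^ (m - (k:ℕ)) *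
      (m.choose (k:ℕ) : ℝ≥0∞) = (p * ENNReal.ofReal c + (1 - p)) ^ m := by
    rw [Fin.sum_univ_eq_sum_range (fun k => (p * ENNReal.ofReal c) ^ k * (1 - p) ^ (m - k) *
      (m.choose k : ℝ≥0∞)), add_pow]
  rw [hsum]
  -- step 4: bound the base
  have hbase : p * ENNReal.ofReal c + (1 - p) ≤ ENNReal.ofReal (Real.exp (q * δ)) := by
    have h1 : (1:ℝ≥0∞) - p = ENNReal.ofReal (1 - q) := by
      rw [ENNReal.ofReal_sub _ hq0, ENNReal.ofReal_one, hpq]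
    rw [h1, hpq, ← ENNReal.ofReal_mul hq0, ← ENNReal.ofReal_add (by positivity) (by linarith)]
    apply ENNReal.ofReal_le_ofReal
    have := Real.add_one_le_exp (q * δ)
    have hqc : q * c + (1 - q) = q * δ + 1 := by rw [hcdef]; ring
    linarith
  calc ENNReal.ofReal (Real.exp (-(t * a))) * (p * ENNReal.ofReal c + (1 - p)) ^ m
      ≤ ENNReal.ofReal (Real.exp (-(t * a))) * (ENNReal.ofReal (Real.exp (q * δ))) ^ m := by
        gcongr
    _ = ENNReal.ofReal (Real.exp ((m:ℝ) * q * δ - t * a)) := by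
        rw [← ENNReal.ofReal_pow (Real.exp_nonneg _), ← Real.exp_nat_mul,
          ← ENNReal.ofReal_mul (Real.exp_nonneg _), ← Real.exp_add]
        congr 1
        ring
    _ ≤ _ := by
        apply ENNReal.ofReal_le_ofReal
        apply Real.exp_le_exp.2
        -- final real inequality
        have hlog : 2 * δ / (2 + δ) ≤ t := aux_two_mul_div_le_log hδ.le
        have h2δ : (0:ℝ) < 2 + δ := by linarith
        have hta : 2 * δ / (2 + δ) * a ≤ t * a := mul_le_mul_of_nonneg_right hlog ha0
        have hkey : (m:ℝ) * q * δ - 2 * δ / (2 + δ) * ((1 + δ) * ((m:ℝ) * q)) =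
            -(δ^2 * ((m:ℝ) * q)) / (2 + δ) := by
          field_simp
          ring
        have htarget : -(δ^2 * ((m:ℝ) * q)) / (2 + δ) =
            -((9 * ε'' - 2) ^ 2 * (ℓ' : ℝ)) / (3 * (4 - 9 * ε'')) := by
          have h49 : (0:ℝ) < 4 - 9 * ε'' := by linarith
          have h2δeq : 2 + δ = (4 - 9 * ε'') / (3 - 9 * ε'') := by
            rw [hδdef]; field_simp; ring
          rw [mul_comm (δ^2), mul_assoc, ← mul_assoc (m:ℝ), hmean, hδdef, h2δeq, div_pow, div_div_eq_mul_div]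
          field_simp
          rw [neg_inj, div_eq_div_iff (mul_pos (by linarith) (by linarith)).ne'
            (by linarith : (0:ℝ) < 4 - ε'' * 9).ne']
          ring
        rw [← htarget, ha]
        rw [ha] at hta
        linarith [hkey, hta]
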